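/- Let b(x) = −x ln x for x ∈ (0, 1/e). Then for all 0 < x, y < 1/e: |b(x) − b(y)| ≤ b(|x − y|), i.e., |x ln x − y ln y| ≤ −|x−y| ln |x−y|. -/
import Mathlib


/-- Modulus-of-continuity estimate for the non-Lipschitz drift `b(x) = −x ln x`:
for `0 < x, y < 1/e`, `|x ln x − y ln y| ≤ −|x−y| ln |x−y|`. -/
theorem neg_mul_log_modulus (x y : ℝ)
    (hx0 : 0 < x) (hx1 : x < Real.exp (-1))
    (hy0 : 0 < y) (hy1 : y < Real.exp (-1)) :
    |x * Real.log x - y * Real.log y| ≤ -(|x - y|) * Real.log |x - y| := by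
  wlog hxy : x ≤ y generalizing x y
  · rw [abs_sub_comm, abs_sub_comm x y]
    exact this y x hy0 hy1 hx0 hx1 (le_of_not_ge hxy)
  rcases eq_or_lt_of_le hxy with h | h
  · subst h; simp
  set d := y - x with hd
  have hd0 : 0 < d := sub_pos.2 h
  have habs : |x - y| = d := by rw [abs_sub_comm]; exact abs_of_pos hd0
  have hlogy : Real.log y < -1 := by
    have := Real.log_lt_log hy0 hy1
    rwa [Real.log_exp] at this
  -- monotonicity: x log x ≥ y log y
  have h1 : x - y ≤ x * (Real.log x - Real.log y) := by
    have h2 := Real.log_le_sub_one_of_pos (div_pos hy0 hx0)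
    rw [Real.log_div (ne_of_gt hy0) (ne_of_gt hx0)] at h2
    have h3 := mul_le_mul_of_nonneg_left h2 hx0.le
    rw [mul_sub, mul_sub, mul_div_cancel₀ _ (ne_of_gt hx0)] at h3
    nlinarith
  have hmono : y * Real.log y ≤ x * Real.log x := by nlinarith
  -- superadditivity: x log x + d log d ≤ y log y
  have hly : Real.log x ≤ Real.log y := Real.log_le_log hx0 hxy
  have hld : Real.log d ≤ Real.log y := Real.log_le_log hd0 (by linarith)
  have hsup : x * Real.log x + d * Real.log d ≤ y * Real.log y := by
    have hy' : y * Real.log y = x * Real.log y + d * Real.log y := by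
      rw [hd]; ring
    nlinarith
  rw [abs_of_nonneg (by linarith : (0:ℝ) ≤ x * Real.log x - y * Real.log y), habs]
  linarith
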